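/- Under the Friedmann limit hypotheses, (a′(τ)² − 1)/a(τ)² → α as τ → 0⁺. Equivalently, the Friedmann energy density ρ(τ) = (3/(8π))·[(a′(τ)/a(τ))² − 1/a(τ)²] tends to 3α/(8π) as τ → 0⁺. -/

import Mathlib

open Filter Topology

/-- Under the Friedmann limit hypotheses (with `f(τ) = a(τ) − τ`:
`f(τ)/τ → 0`, `f′(τ)/τ → 0`, `f″(τ)/τ → α` as `τ → 0⁺`), one has
`(a′(τ)² − 1)/a(τ)² → α`; equivalently the Friedmann energy density
`ρ(τ) = (3/(8π))[(a′/a)² − 1/a²]` tends to `3α/(8π)` as `τ → 0⁺`. -/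
theorem friedmann_energy_density_limit
    (α δ : ℝ) (hδ : 0 < δ) (a : ℝ → ℝ)
    (hpos : ∀ τ ∈ Set.Ioo (0 : ℝ) δ, 0 < a τ)
    (hdiff : ∀ τ ∈ Set.Ioo (0 : ℝ) δ, DifferentiableAt ℝ a τ)
    (hdiff2 : ∀ τ ∈ Set.Ioo (0 : ℝ) δ, DifferentiableAt ℝ (deriv a) τ)
    (hf0 : Tendsto (fun τ => (a τ - τ) / τ) (𝓝[>] (0 : ℝ)) (𝓝 0))
    (hf1 : Tendsto (fun τ => (deriv a τ - 1) / τ) (𝓝[>] (0 : ℝ)) (𝓝 0))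
    (hf2 : Tendsto (fun τ => deriv (deriv a) τ / τ) (𝓝[>] (0 : ℝ)) (𝓝 α)) :
    Tendsto (fun τ => ((deriv a τ) ^ 2 - 1) / (a τ) ^ 2) (𝓝[>] (0 : ℝ)) (𝓝 α) ∧
    Tendsto (fun τ => (3 / (8 * Real.pi)) * ((deriv a τ / a τ) ^ 2 - 1 / (a τ) ^ 2))
      (𝓝[>] (0 : ℝ)) (𝓝 (3 * α / (8 * Real.pi))) := by
  have hmem : Set.Ioo (0 : ℝ) δ ∈ 𝓝[>] (0 : ℝ) :=
    Ioo_mem_nhdsGT_of_mem ⟨le_refl 0, hδ⟩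
  have hτ0 : Tendsto (fun τ : ℝ => τ) (𝓝[>] (0 : ℝ)) (𝓝 0) :=
    tendsto_id.mono_left nhdsWithin_le_nhds
  -- a'(τ) - 1 → 0
  have h1 : Tendsto (fun τ => deriv a τ - 1) (𝓝[>] (0 : ℝ)) (𝓝 0) := by
    have : Tendsto (fun τ => (deriv a τ - 1) / τ * τ) (𝓝[>] (0 : ℝ)) (𝓝 (0 * 0)) :=
      hf1.mul hτ0
    rw [zero_mul] at this
    refine this.congr' ?_
    filter_upwards [self_mem_nhdsWithin] with τ (hτ : 0 < τ)
    field_simp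
  -- L'Hôpital: (a'(τ) - 1)/τ² → α/2
  have hL : Tendsto (fun τ => (deriv a τ - 1) / τ ^ 2) (𝓝[>] (0 : ℝ)) (𝓝 (α / 2)) := by
    apply HasDerivAt.lhopital_zero_right_on_Ioo (f' := fun τ => deriv (deriv a) τ)
      (g' := fun τ => 2 * τ) hδ
    · intro x hx
      simpa using ((hdiff2 x hx).hasDerivAt.sub_const 1)
    · intro x hx
      simpa [mul_comm] using (hasDerivAt_pow 2 x)
    · intro x hx
      exact mul_ne_zero two_ne_zero (ne_of_gt hx.1)
    · exact h1
    · simpa using (hτ0.pow 2)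
    · have := hf2.div_const 2
      refine this.congr' ?_
      filter_upwards [self_mem_nhdsWithin] with τ (hτ : 0 < τ)
      rw [div_div, mul_comm]
  -- τ / a(τ) → 1
  have haτ : Tendsto (fun τ => a τ / τ) (𝓝[>] (0 : ℝ)) (𝓝 1) := by
    have := hf0.add (tendsto_const_nhds (x := (1:ℝ)))
    rw [zero_add] at this
    refine this.congr' ?_
    filter_upwards [self_mem_nhdsWithin] with τ (hτ : 0 < τ)
    field_simp
    ring
  have hτa : Tendsto (fun τ => τ / a τ) (𝓝[>] (0 : ℝ)) (𝓝 1) := by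
    have := haτ.inv₀ one_ne_zero
    rw [inv_one] at this
    refine this.congr' ?_
    filter_upwards [self_mem_nhdsWithin] with τ (hτ : 0 < τ)
    simp [one_div]
  -- a'(τ) + 1 → 2
  have h2 : Tendsto (fun τ => deriv a τ + 1) (𝓝[>] (0 : ℝ)) (𝓝 2) := by
    have := h1.add (tendsto_const_nhds (x := (2:ℝ)))
    rw [zero_add] at this
    refine this.congr ?_
    intro τ; ring
  -- main limit
  have hmain : Tendsto (fun τ => ((deriv a τ) ^ 2 - 1) / (a τ) ^ 2)
      (𝓝[>] (0 : ℝ)) (𝓝 α) := by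
    have := hL.mul (h2.mul (hτa.pow 2))
    have heq : (α / 2) * (2 * 1 ^ 2) = α := by ring
    rw [heq] at this
    refine this.congr' ?_
    filter_upwards [hmem] with τ hτ
    have hτpos := hτ.1
    have hapos := hpos τ hτ
    field_simp
    ring
  refine ⟨hmain, ?_⟩
  have := hmain.const_mul (3 / (8 * Real.pi))
  have heq : (3 / (8 * Real.pi)) * α = 3 * α / (8 * Real.pi) := by ring
  rw [heq] at this
  refine this.congr' ?_
  filter_upwards [hmem] with τ hτ
  have hapos := hpos τ hτ
  have : a τ ≠ 0 := ne_of_gt hapos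
  field_simp
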